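/- Let A ∈ M_m(ℂ) be a complex square matrix. The sequence of powers (Aⁿ)_{n∈ℕ} has at least one cluster point (in M_m(ℂ) with its standard topology) if and only if every eigenvalue z of A satisfies |z| ≤ 1, and for every eigenvalue z with |z| = 1 the eigenspace of z coincides with the generalized eigenspace of z (i.e. all Jordan blocks of z are trivial). -/

import Mathlib

open Matrix Filter Finset Topology

section Aux

variable {V : Type*} [AddCommGroup V] [Module ℂ V]

/-- Binomial expansion of powers of an endomorphism around a scalar. -/
lemma end_pow_eq_sum (f : Module.End ℂ V) (z : ℂ) (n : ℕ) (x : V) :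
    (f ^ n) x = ∑ i ∈ Finset.range (n + 1),
      ((n.choose i : ℂ) * z ^ (n - i)) • (((f - z • 1) ^ i) x) := by
  have hc : Commute (f - z • (1 : Module.End ℂ V)) (z • (1 : Module.End ℂ V)) :=
    (Commute.one_right _).smul_right z
  have h := hc.add_pow n
  rw [sub_add_cancel] at h
  rw [h, LinearMap.sum_apply]
  refine Finset.sum_congr rfl fun i _ => ?_
  rw [smul_pow, one_pow, Module.End.mul_apply, Module.End.mul_apply,
    Module.End.natCast_apply, LinearMap.smul_apply, Module.End.one_apply]
  rw [_root_.map_smul, map_nsmul]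
  rw [smul_comm, ← Nat.cast_smul_eq_nsmul ℂ, ← mul_smul]

/-- From a vector killed by a power of `N`, produce the last nonzero iterate. -/
lemma exists_last_nonzero (N : Module.End ℂ V) {x : V} (hx : x ≠ 0) {k : ℕ}
    (hk : (N ^ k) x = 0) : ∃ j, (N ^ j) x ≠ 0 ∧ N ((N ^ j) x) = 0 := by
  classical
  have hex : ∃ k, (N ^ k) x = 0 := ⟨k, hk⟩
  have hj : (N ^ Nat.find hex) x = 0 := Nat.find_spec hex
  have hjpos : Nat.find hex ≠ 0 := by
    intro h
    rw [h, pow_zero, Module.End.one_apply] at hj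
    exact hx hj
  obtain ⟨p, hp⟩ : ∃ p, Nat.find hex = p + 1 := ⟨Nat.find hex - 1, by omega⟩
  refine ⟨p, Nat.find_min hex (by omega), ?_⟩
  rw [← Module.End.mul_apply, ← pow_succ', ← hp, hj]

lemma choose_mul_pow_tendsto (i : ℕ) {r : ℝ} (h0 : 0 ≤ r) (h1 : r < 1) :
    Tendsto (fun n : ℕ => (n.choose i : ℝ) * r ^ (n - i)) atTop (𝓝 0) := by
  rcases eq_or_lt_of_le h0 with h | h
  · apply Tendsto.congr' _ tendsto_const_nhds
    filter_upwards [eventually_ge_atTop (i + 1)] with n hn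
    rw [← h, zero_pow (by omega), mul_zero]
  · have hs : Summable (fun n : ℕ => (n : ℝ) ^ i * r ^ n) :=
      summable_pow_mul_geometric_of_norm_lt_one i
        (by rwa [Real.norm_eq_abs, abs_of_nonneg h0])
    have key : Tendsto (fun n : ℕ => (n : ℝ) ^ i * r ^ n / r ^ i) atTop (𝓝 0) := by
      simpa using hs.tendsto_atTop_zero.div_const (r ^ i)
    apply squeeze_zero' (Filter.Eventually.of_forall fun n => by positivity) _ key
    filter_upwards [eventually_ge_atTop i] with n hn
    rw [pow_sub₀ r (ne_of_gt h) hn, div_eq_mul_inv]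
    have hch : (n.choose i : ℝ) ≤ (n : ℝ) ^ i := by
      exact_mod_cast Nat.choose_le_pow n i
    have : (0:ℝ) ≤ r ^ n * (r ^ i)⁻¹ := by positivity
    calc (n.choose i : ℝ) * (r ^ n * (r ^ i)⁻¹)
        ≤ (n : ℝ) ^ i * (r ^ n * (r ^ i)⁻¹) := by gcongr
      _ = (n : ℝ) ^ i * r ^ n * (r ^ i)⁻¹ := by ring

lemma mulVecLin_pow' {m : ℕ} (A : Matrix (Fin m) (Fin m) ℂ) (n : ℕ) :
    mulVecLin (A ^ n) = (mulVecLin A) ^ n := by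
  induction n with
  | zero => simp [Matrix.mulVecLin_one]; rfl
  | succ n ih => rw [pow_succ, pow_succ, Matrix.mulVecLin_mul, ih]; rfl

lemma no_blowup {m : ℕ} {A S : Matrix (Fin m) (Fin m) ℂ}
    (hS : MapClusterPt S Filter.atTop fun n => A ^ n) (u : Fin m → ℂ)
    (hu : Tendsto (fun n => ‖((mulVecLin A ^ n)) u‖) atTop atTop) : False := by
  have hg : Continuous fun M : Matrix (Fin m) (Fin m) ℂ => M *ᵥ u :=
    continuous_id.matrix_mulVec continuous_const
  have heq : ∀ n : ℕ, (A ^ n) *ᵥ u = ((mulVecLin A) ^ n) u := fun n => by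
    rw [← mulVecLin_pow']; rfl
  have h3 : ∀ᶠ n in atTop, ‖S *ᵥ u‖ + 1 < ‖(A ^ n) *ᵥ u‖ := by
    have := hu.eventually_gt_atTop (‖S *ᵥ u‖ + 1)
    filter_upwards [this] with n hn
    rw [heq]; exact hn
  have hnb : (fun M : Matrix (Fin m) (Fin m) ℂ => M *ᵥ u) ⁻¹' Metric.ball (S *ᵥ u) 1 ∈ 𝓝 S :=
    hg.continuousAt.preimage_mem_nhds (Metric.ball_mem_nhds _ one_pos)
  have h4 : ∃ᶠ n in atTop, (A ^ n) *ᵥ u ∈ Metric.ball (S *ᵥ u) 1 :=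
    (mapClusterPt_iff_frequently.1 hS) _ hnb
  obtain ⟨n, hn1, hn2⟩ := (h4.and_eventually h3).exists
  have hb : ‖(A ^ n) *ᵥ u - S *ᵥ u‖ < 1 := mem_ball_iff_norm.1 hn1
  have := norm_sub_norm_le ((A ^ n) *ᵥ u) (S *ᵥ u)
  linarith

end Aux

/-- The sequence of powers of a complex matrix has a cluster point iff all eigenvalues lie
in the closed unit disc and every peripheral eigenvalue has trivial Jordan blocks. -/
theorem stmt_11 (m : ℕ) (A : Matrix (Fin m) (Fin m) ℂ) :
    (∃ S : Matrix (Fin m) (Fin m) ℂ, MapClusterPt S Filter.atTop fun n => A ^ n) ↔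
      ((∀ z : ℂ, Module.End.HasEigenvalue (Matrix.mulVecLin A) z → ‖z‖ ≤ 1)
        ∧ ∀ z : ℂ, ‖z‖ = 1 →
            Module.End.eigenspace (Matrix.mulVecLin A) z
              = Module.End.maxGenEigenspace (Matrix.mulVecLin A) z) := by
  set f : Module.End ℂ (Fin m → ℂ) := Matrix.mulVecLin A with hf
  constructor
  · rintro ⟨S, hS⟩
    constructor
    · -- all eigenvalues in the closed unit disc
      intro z hz
      by_contra hlt
      push_neg at hlt
      obtain ⟨v, hv⟩ := hz.exists_hasEigenvector
      refine no_blowup hS v ?_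
      have hnorm : ∀ n : ℕ, ‖((mulVecLin A) ^ n) v‖ = ‖z‖ ^ n * ‖v‖ := fun n => by
        rw [hv.pow_apply, norm_smul, norm_pow]
      have ht : Tendsto (fun n : ℕ => ‖z‖ ^ n * ‖v‖) atTop atTop :=
        (tendsto_pow_atTop_atTop_of_one_lt hlt).atTop_mul_const
          (norm_pos_iff.2 hv.right)
      exact ht.congr fun n => (hnorm n).symm
    · -- peripheral eigenvalues have trivial Jordan blocks
      intro z hz1
      refine le_antisymm ((f.genEigenspace z).monotone le_top) ?_
      intro x hx
      by_contra hxe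
      obtain ⟨k, hk⟩ := (Module.End.mem_maxGenEigenspace f z x).1 hx
      set N : Module.End ℂ (Fin m → ℂ) := f - z • 1 with hN
      have hNx : N x ≠ 0 := by
        intro h0
        apply hxe
        rw [Module.End.mem_eigenspace_iff]
        have : f x - z • x = 0 := by
          simpa [hN, sub_eq_zero, LinearMap.sub_apply, LinearMap.smul_apply,
            Module.End.one_apply] using h0
        rw [← sub_eq_zero]; exact this
      have hkNx : (N ^ k) (N x) = 0 := by
        rw [← Module.End.mul_apply, ← pow_succ, pow_succ', Module.End.mul_apply, hk,
          map_zero]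
      obtain ⟨j, hj1, hj2⟩ := exists_last_nonzero N hNx hkNx
      set u : Fin m → ℂ := (N ^ j) x with hu
      set v : Fin m → ℂ := N u with hv
      have hvj : v = (N ^ j) (N x) := by
        rw [hv, hu, ← Module.End.mul_apply, ← pow_succ', pow_succ, Module.End.mul_apply]

      have hvne : v ≠ 0 := by rw [hvj]; exact hj1
      have hNv : N v = 0 := by rw [hvj]; exact hj2
      have hN2 : ∀ i, 2 ≤ i → (N ^ i) u = 0 := by
        intro i hi
        obtain ⟨p, hp⟩ : ∃ p, i = p + 2 := ⟨i - 2, by omega⟩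
        subst hp
        rw [pow_add, Module.End.mul_apply, pow_two, Module.End.mul_apply, ← hv, hNv,
          map_zero]
      -- for n ≥ 1, f^n u = z^n • u + (n * z^(n-1)) • v
      have key : ∀ n : ℕ, 1 ≤ n →
          (f ^ n) u = (z ^ n) • u + ((n : ℂ) * z ^ (n - 1)) • v := by
        intro n hn
        rw [end_pow_eq_sum f z n u]
        have hsub : Finset.range 2 ⊆ Finset.range (n + 1) :=
          Finset.range_subset_range.2 (by omega)
        rw [← Finset.sum_subset hsub (fun i _ hi => by
          rw [hN2 i (by simp at hi; omega), smul_zero])]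
        rw [Finset.sum_range_succ, Finset.sum_range_one]
        simp [pow_zero, pow_one, Nat.choose_zero_right, Nat.choose_one_right, ← hv]
        rw [hv, hN]; simp
      refine no_blowup hS u ?_
      have hlow : ∀ᶠ n : ℕ in atTop, (n : ℝ) * ‖v‖ - ‖u‖ ≤ ‖((mulVecLin A) ^ n) u‖ := by
        filter_upwards [eventually_ge_atTop 1] with n hn
        have := key n hn
        rw [← hf, this]
        have h1 : ‖((n : ℂ) * z ^ (n - 1)) • v‖ = (n : ℝ) * ‖v‖ := by
          rw [norm_smul, norm_mul, norm_pow, hz1, one_pow, mul_one, Complex.norm_natCast]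
        have h2 : ‖(z ^ n) • u‖ = ‖u‖ := by
          rw [norm_smul, norm_pow, hz1, one_pow, one_mul]
        have hle := norm_sub_norm_le (((n : ℂ) * z ^ (n - 1)) • v) (-((z ^ n) • u))
        rw [norm_neg, sub_neg_eq_add] at hle
        calc (n : ℝ) * ‖v‖ - ‖u‖
            = ‖((n : ℂ) * z ^ (n - 1)) • v‖ - ‖(z ^ n) • u‖ := by rw [h1, h2]
          _ ≤ ‖((n : ℂ) * z ^ (n - 1)) • v + (z ^ n) • u‖ := hle
          _ = ‖(z ^ n) • u + ((n : ℂ) * z ^ (n - 1)) • v‖ := by rw [add_comm]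
      have hbase : Tendsto (fun n : ℕ => (n : ℝ) * ‖v‖ - ‖u‖) atTop atTop := by
        have h1 : Tendsto (fun n : ℕ => (n : ℝ) * ‖v‖) atTop atTop :=
          tendsto_natCast_atTop_atTop.atTop_mul_const (norm_pos_iff.2 hvne)
        simpa [sub_eq_add_neg] using tendsto_atTop_add_const_right atTop (-‖u‖) h1
      exact tendsto_atTop_mono' atTop hlow hbase
  · rintro ⟨h1, h2⟩
    -- the orbit of every vector is bounded
    have hbdd : ∀ x : Fin m → ℂ, ∃ C : ℝ, ∀ n : ℕ, ‖(((mulVecLin A) ^ n)) x‖ ≤ C := by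
      let P : Submodule ℂ (Fin m → ℂ) :=
        { carrier := {x | ∃ C : ℝ, ∀ n : ℕ, ‖((f ^ n)) x‖ ≤ C}
          add_mem' := by
            rintro a b ⟨Ca, ha⟩ ⟨Cb, hb⟩
            exact ⟨Ca + Cb, fun n => by
              rw [_root_.map_add]
              exact (norm_add_le _ _).trans (add_le_add (ha n) (hb n))⟩
          zero_mem' := ⟨0, fun n => by simp⟩
          smul_mem' := by
            rintro c a ⟨C, ha⟩
            refine ⟨‖c‖ * C, fun n => ?_⟩
            rw [_root_.map_smul, norm_smul]
            exact mul_le_mul_of_nonneg_left (ha n) (norm_nonneg c) }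
      have hP : ∀ z : ℂ, f.maxGenEigenspace z ≤ P := by
        intro z
        rcases lt_trichotomy ‖z‖ 1 with hlt | heq | hgt
        · -- interior eigenvalue: orbit tends to 0
          intro x hx
          obtain ⟨k, hk⟩ := (Module.End.mem_maxGenEigenspace f z x).1 hx
          set N : Module.End ℂ (Fin m → ℂ) := f - z • 1 with hN
          have hNi : ∀ i, k ≤ i → (N ^ i) x = 0 := by
            intro i hi
            obtain ⟨p, hp⟩ : ∃ p, i = p + k := ⟨i - k, by omega⟩
            subst hp
            rw [pow_add, Module.End.mul_apply, hk, map_zero]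
          set g : ℕ → ℕ → ℝ :=
            fun n i => (n.choose i : ℝ) * ‖z‖ ^ (n - i) * ‖(N ^ i) x‖ with hg
          have hgnn : ∀ n i, 0 ≤ g n i := fun n i => by positivity
          have hbound : ∀ n : ℕ, ‖(f ^ n) x‖ ≤ ∑ i ∈ Finset.range k, g n i := by
            intro n
            rw [end_pow_eq_sum f z n x]
            refine (norm_sum_le _ _).trans ?_
            have hstep : ∀ i, ‖((n.choose i : ℂ) * z ^ (n - i)) • ((N ^ i) x)‖ = g n i := by
              intro i
              rw [norm_smul, norm_mul, norm_pow, Complex.norm_natCast, hg]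
            calc ∑ i ∈ Finset.range (n + 1), ‖((n.choose i : ℂ) * z ^ (n - i)) • ((N ^ i) x)‖
                = ∑ i ∈ Finset.range (n + 1), g n i := by
                  exact Finset.sum_congr rfl fun i _ => hstep i
              _ ≤ ∑ i ∈ Finset.range (max k (n + 1)), g n i := by
                  refine Finset.sum_le_sum_of_subset_of_nonneg
                    (Finset.range_subset_range.2 (le_max_right _ _)) fun i _ _ => hgnn n i
              _ = ∑ i ∈ Finset.range k, g n i := by
                  refine (Finset.sum_subset (Finset.range_subset_range.2 (le_max_left _ _))
                    fun i _ hi => ?_).symm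
                  have hik : k ≤ i := by
                    simp only [Finset.mem_range] at hi
                    omega
                  rw [hg]
                  simp [hNi i hik]
          have htend : Tendsto (fun n => ∑ i ∈ Finset.range k, g n i) atTop (𝓝 0) := by
            have : ∀ i ∈ Finset.range k,
                Tendsto (fun n => g n i) atTop (𝓝 0) := by
              intro i _
              have := (choose_mul_pow_tendsto i (norm_nonneg z) hlt).mul_const ‖(N ^ i) x‖
              simpa [hg] using this
            simpa using tendsto_finset_sum (Finset.range k) this
          obtain ⟨C, hC⟩ := htend.bddAbove_range
          exact ⟨C, fun n => (hbound n).trans (hC ⟨n, rfl⟩)⟩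
        · -- peripheral eigenvalue: generalized eigenspace is the eigenspace
          rw [← h2 z heq]
          intro x hx
          have hfx : f x = z • x := Module.End.mem_eigenspace_iff.1 hx
          have hpow : ∀ n : ℕ, (f ^ n) x = (z ^ n) • x := by
            intro n
            induction n with
            | zero => simp
            | succ n ih =>
              rw [pow_succ, Module.End.mul_apply, hfx, _root_.map_smul, ih, smul_smul,
                pow_succ, mul_comm]
          exact ⟨‖x‖, fun n => by rw [hpow n, norm_smul, norm_pow, heq, one_pow, one_mul]⟩
        · -- no eigenvalues outside the closed disc
          intro x hx
          by_cases hx0 : x = 0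
          · rw [hx0]; exact P.zero_mem
          exfalso
          obtain ⟨k, hk⟩ := (Module.End.mem_maxGenEigenspace f z x).1 hx
          obtain ⟨j, hj1, hj2⟩ := exists_last_nonzero (f - z • 1) hx0 hk
          have : Module.End.HasEigenvalue f z := by
            refine Module.End.hasEigenvalue_of_hasEigenvector
              (x := ((f - z • 1) ^ j) x) ⟨Module.End.mem_eigenspace_iff.2 ?_, hj1⟩
            have : f (((f - z • 1) ^ j) x) - z • (((f - z • 1) ^ j) x) = 0 := by
              simpa [LinearMap.sub_apply, LinearMap.smul_apply,
                Module.End.one_apply] using hj2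
            rw [← sub_eq_zero]; exact this
          exact absurd (h1 z this) (not_le.2 hgt)
      intro x
      have htop : x ∈ (⨆ z : ℂ, f.maxGenEigenspace z) := by
        rw [Module.End.iSup_maxGenEigenspace_eq_top]; trivial
      exact (iSup_le hP) htop
    -- entrywise bound and compactness
    classical
    choose c hc using fun j : Fin m => hbdd (Pi.single j 1)
    set K : Set (Matrix (Fin m) (Fin m) ℂ) :=
      {M : Matrix (Fin m) (Fin m) ℂ | ∀ i j, M i j ∈ Metric.closedBall (0 : ℂ) (c j)}
      with hK
    have hKc : IsCompact K := by
      have : IsCompact (Set.pi Set.univ fun _ : Fin m =>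
          Set.pi Set.univ fun j : Fin m => Metric.closedBall (0 : ℂ) (c j)) :=
        isCompact_univ_pi fun _ =>
          isCompact_univ_pi fun j => isCompact_closedBall 0 (c j)
      have hset : K = Set.pi Set.univ (fun _ : Fin m =>
          Set.pi Set.univ fun j : Fin m => Metric.closedBall (0 : ℂ) (c j)) := by
        ext M
        constructor
        · exact fun hM i _ j _ => hM i j
        · exact fun hM i j => hM i (Set.mem_univ i) j (Set.mem_univ j)
      rw [hset]
      exact this
    have hmem : ∀ n : ℕ, A ^ n ∈ K := by
      intro n i j
      rw [Metric.mem_closedBall, dist_zero_right]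
      have h1 : (A ^ n) *ᵥ Pi.single j 1 = fun i => (A ^ n) i j * 1 :=
        mulVec_single _ _ _
      have h2 : ‖((A ^ n) *ᵥ Pi.single j 1) i‖ ≤ ‖(A ^ n) *ᵥ Pi.single j 1‖ :=
        norm_le_pi_norm _ i
      have h3 : ((A ^ n) *ᵥ Pi.single j 1) i = (A ^ n) i j := by rw [h1]; simp
      have h4 : (A ^ n) *ᵥ Pi.single j 1 = ((mulVecLin A) ^ n) (Pi.single j 1) := by
        rw [← mulVecLin_pow']; rfl
      rw [h3] at h2
      calc ‖(A ^ n) i j‖ ≤ ‖(A ^ n) *ᵥ Pi.single j 1‖ := h2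
        _ = ‖((mulVecLin A) ^ n) (Pi.single j 1)‖ := by rw [h4]
        _ ≤ c j := hc j n
    have hle : Filter.map (fun n => A ^ n) Filter.atTop ≤ Filter.principal K := by
      rw [Filter.le_principal_iff]
      exact Filter.mem_map.2 (Filter.Eventually.of_forall hmem)
    obtain ⟨S, -, hS⟩ := hKc.exists_clusterPt hle
    exact ⟨S, hS⟩
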